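/- If G is a finite connected C4-free Helly graph of radius r ≥ 2 and diameter 2r, then the center C(G) is a clique. -/
import Mathlib


open SimpleGraph

variable {V : Type*}

/-- The ball of radius `r` centered at `v`. -/
def gBall (G : SimpleGraph V) (v : V) (r : ℕ) : Set V := {u | G.dist v u ≤ r}

/-- A graph is Helly if every (nonempty) family of pairwise intersecting balls
has a nonempty common intersection. -/
def IsHelly (G : SimpleGraph V) : Prop :=
  ∀ F : Set (V × ℕ), F.Nonempty →
    (∀ p ∈ F, ∀ q ∈ F, (gBall G p.1 p.2 ∩ gBall G q.1 q.2).Nonempty) →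
    (⋂ p ∈ F, gBall G p.1 p.2).Nonempty

/-- The eccentricity of a vertex. -/
noncomputable def ecc (G : SimpleGraph V) [Fintype V] (v : V) : ℕ :=
  Finset.univ.sup (fun u => G.dist v u)

/-- The radius of a graph. -/
noncomputable def grad (G : SimpleGraph V) [Fintype V] : ℕ :=
  sInf (Set.range (ecc G))

/-- The diameter of a graph. -/
noncomputable def gdiam (G : SimpleGraph V) [Fintype V] : ℕ :=
  Finset.univ.sup (ecc G)

/-- The center of a graph: vertices of minimum eccentricity. -/
noncomputable def gcenter (G : SimpleGraph V) [Fintype V] : Set V :=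
  {v | ecc G v = grad G}

/-- Distance from a vertex to a set of vertices. -/
noncomputable def distS (G : SimpleGraph V) (v : V) (S : Set V) : ℕ :=
  sInf (G.dist v '' S)

/-- The metric projection of a vertex onto a set of vertices. -/
noncomputable def proj (G : SimpleGraph V) (v : V) (S : Set V) : Set V :=
  {s ∈ S | G.dist v s = distS G v S}

/-- The slice `L(u,k,v)`: vertices on the metric interval from `u` to `v`
at distance `k` from `u`. -/
def gslice (G : SimpleGraph V) (u : V) (k : ℕ) (v : V) : Set V :=
  {w | G.dist u w = k ∧ G.dist u w + G.dist w v = G.dist u v}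

/-- A graph is `C₄`-free if it has no induced cycle on four vertices. -/
def C4Free (G : SimpleGraph V) : Prop :=
  ¬ ∃ a b c d : V, a ≠ b ∧ a ≠ c ∧ a ≠ d ∧ b ≠ c ∧ b ≠ d ∧ c ≠ d ∧
    G.Adj a b ∧ G.Adj b c ∧ G.Adj c d ∧ G.Adj d a ∧ ¬ G.Adj a c ∧ ¬ G.Adj b d

/-- The open neighbourhood of a set: vertices outside it with a neighbour in it. -/
def nbhdSet (G : SimpleGraph V) (C : Set V) : Set V :=
  {v | v ∉ C ∧ ∃ c ∈ C, G.Adj v c}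

/-- Along a walk of length `≤ m + n` there is a vertex within `m` of the start
and `n` of the end. -/
lemma walk_between (G : SimpleGraph V) (hconn : G.Connected) {u v : V} (p : G.Walk u v) :
    ∀ m n : ℕ, p.length ≤ m + n → ∃ w, G.dist u w ≤ m ∧ G.dist v w ≤ n := by
  induction p with
  | @nil u =>
    intro m n _
    refine ⟨u, ?_, ?_⟩ <;> simp [SimpleGraph.dist_self]
  | @cons u c v h q ih =>
    intro m n hmn
    cases m with
    | zero =>
      refine ⟨u, by simp, ?_⟩
      calc G.dist v u = G.dist u v := SimpleGraph.dist_comm ..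
        _ ≤ (SimpleGraph.Walk.cons h q).length := SimpleGraph.dist_le _
        _ ≤ n := by simpa using hmn
    | succ m' =>
      obtain ⟨w, hw1, hw2⟩ := ih m' n
        (by simp only [SimpleGraph.Walk.length_cons] at hmn; omega)
      refine ⟨w, ?_, hw2⟩
      have h1 : G.dist u c = 1 := SimpleGraph.dist_eq_one_iff_adj.mpr h
      have ht : G.dist u w ≤ G.dist u c + G.dist c w := hconn.dist_triangle
      omega

/-- Two balls whose radii sum dominates the distance between their centers
intersect. -/
lemma ball_inter (G : SimpleGraph V) (hconn : G.Connected) {u v : V} {m n : ℕ}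
    (h : G.dist u v ≤ m + n) : ∃ w, G.dist u w ≤ m ∧ G.dist v w ≤ n := by
  obtain ⟨p, hp⟩ := (hconn u v).exists_walk_length_eq_dist
  exact walk_between G hconn p m n (hp ▸ h)

lemma pairwise_balls (G : SimpleGraph V) (hconn : G.Connected) {F : Set (V × ℕ)}
    (h : ∀ p ∈ F, ∀ q ∈ F, G.dist p.1 q.1 ≤ p.2 + q.2) :
    ∀ p ∈ F, ∀ q ∈ F, (gBall G p.1 p.2 ∩ gBall G q.1 q.2).Nonempty := by
  intro p hp q hq
  obtain ⟨w, h1, h2⟩ := ball_inter G hconn (h p hp q hq)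
  exact ⟨w, h1, h2⟩

/-- A finite connected C4-free Helly graph of radius `r ≥ 2` and
diameter `2r` has a clique center. -/
theorem stmt13 (G : SimpleGraph V) [Fintype V] (hconn : G.Connected) (hH : IsHelly G)
    (hC4 : C4Free G) (hr : 2 ≤ grad G) (hd : gdiam G = 2 * grad G) :
    G.IsClique (gcenter G) := by
  classical
  haveI : Nonempty V := hconn.nonempty
  set r := grad G with hrdef
  -- a diametral pair
  obtain ⟨a, -, ha⟩ := Finset.exists_mem_eq_sup (Finset.univ : Finset V)
    Finset.univ_nonempty (ecc G)
  obtain ⟨b, -, hb⟩ := Finset.exists_mem_eq_sup (Finset.univ : Finset V)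
    Finset.univ_nonempty (fun u => G.dist a u)
  have hab : G.dist a b = 2 * r := by
    have h1 : gdiam G = ecc G a := ha
    have h2 : ecc G a = G.dist a b := hb
    rw [← h2, ← h1, hd]
  -- the middle set
  set M : V → Prop := fun v => G.dist a v = r ∧ G.dist b v = r with hMdef
  have hMcenter : ∀ x, ecc G x = r → M x := by
    intro x hx
    have h1 : G.dist x a ≤ r := hx ▸ Finset.le_sup (Finset.mem_univ a)
    have h2 : G.dist x b ≤ r := hx ▸ Finset.le_sup (Finset.mem_univ b)
    have h1' : G.dist a x ≤ r := by rwa [SimpleGraph.dist_comm] at h1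
    have h2' : G.dist b x ≤ r := by rwa [SimpleGraph.dist_comm] at h2
    have ht : G.dist a b ≤ G.dist a x + G.dist x b := hconn.dist_triangle
    have hc : G.dist x b = G.dist b x := SimpleGraph.dist_comm ..
    constructor <;> omega
  -- no two middle vertices at distance exactly 2
  have key2 : ∀ x y, M x → M y → G.dist x y = 2 → False := by
    rintro x y ⟨hax, hbx⟩ ⟨hay, hby⟩ hxy
    have hyx : G.dist y x = 2 := by rwa [SimpleGraph.dist_comm] at hxy
    have hxa : G.dist x a = r := by rwa [SimpleGraph.dist_comm] at hax
    have hxb : G.dist x b = r := by rwa [SimpleGraph.dist_comm] at hbx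
    have hya : G.dist y a = r := by rwa [SimpleGraph.dist_comm] at hay
    have hyb : G.dist y b = r := by rwa [SimpleGraph.dist_comm] at hby
    -- first Helly family, around b
    have huex : ∃ u, G.dist x u ≤ 1 ∧ G.dist y u ≤ 1 ∧ G.dist b u ≤ r - 1 := by
      set F : Set (V × ℕ) := {(x, 1), (y, 1), (b, r - 1)} with hF
      have hpw : ∀ p ∈ F, ∀ q ∈ F, G.dist p.1 q.1 ≤ p.2 + q.2 := by
        intro p hp q hq
        simp only [hF, Set.mem_insert_iff, Set.mem_singleton_iff] at hp hq
        have d1 := (SimpleGraph.dist_self : G.dist x x = 0)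
        have d2 := (SimpleGraph.dist_self : G.dist y y = 0)
        have d3 := (SimpleGraph.dist_self : G.dist b b = 0)
        rcases hp with rfl | rfl | rfl <;> rcases hq with rfl | rfl | rfl <;>
          simp only <;> omega
      obtain ⟨u, hu⟩ := hH F ⟨(x, 1), by simp [hF]⟩ (pairwise_balls G hconn hpw)
      refine ⟨u, ?_, ?_, ?_⟩
      · exact Set.mem_iInter₂.mp hu (x, 1) (by simp [hF])
      · exact Set.mem_iInter₂.mp hu (y, 1) (by simp [hF])
      · exact Set.mem_iInter₂.mp hu (b, r - 1) (by simp [hF])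
    have hvex : ∃ v, G.dist x v ≤ 1 ∧ G.dist y v ≤ 1 ∧ G.dist a v ≤ r - 1 := by
      set F : Set (V × ℕ) := {(x, 1), (y, 1), (a, r - 1)} with hF
      have hpw : ∀ p ∈ F, ∀ q ∈ F, G.dist p.1 q.1 ≤ p.2 + q.2 := by
        intro p hp q hq
        simp only [hF, Set.mem_insert_iff, Set.mem_singleton_iff] at hp hq
        have d1 := (SimpleGraph.dist_self : G.dist x x = 0)
        have d2 := (SimpleGraph.dist_self : G.dist y y = 0)
        have d3 := (SimpleGraph.dist_self : G.dist a a = 0)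
        rcases hp with rfl | rfl | rfl <;> rcases hq with rfl | rfl | rfl <;>
          simp only <;> omega
      obtain ⟨v, hv⟩ := hH F ⟨(x, 1), by simp [hF]⟩ (pairwise_balls G hconn hpw)
      refine ⟨v, ?_, ?_, ?_⟩
      · exact Set.mem_iInter₂.mp hv (x, 1) (by simp [hF])
      · exact Set.mem_iInter₂.mp hv (y, 1) (by simp [hF])
      · exact Set.mem_iInter₂.mp hv (a, r - 1) (by simp [hF])
    obtain ⟨u, hxu, hyu, hbu⟩ := huex
    obtain ⟨v, hxv, hyv, hav⟩ := hvex
    -- u is far from a, v is far from b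
    have hau : r + 1 ≤ G.dist a u := by
      have ht : G.dist a b ≤ G.dist a u + G.dist u b := hconn.dist_triangle
      have hc : G.dist u b = G.dist b u := SimpleGraph.dist_comm ..
      omega
    have hbv : r + 1 ≤ G.dist b v := by
      have ht : G.dist b a ≤ G.dist b v + G.dist v a := hconn.dist_triangle
      have hc1 : G.dist b a = G.dist a b := SimpleGraph.dist_comm ..
      have hc2 : G.dist v a = G.dist a v := SimpleGraph.dist_comm ..
      omega
    -- basic distinctness
    have hxyne : x ≠ y := by rintro rfl; simp [SimpleGraph.dist_self] at hxy
    have huxne : u ≠ x := by rintro rfl; omega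
    have huyne : u ≠ y := by rintro rfl; omega
    have hvxne : v ≠ x := by rintro rfl; omega
    have hvyne : v ≠ y := by rintro rfl; omega
    have huvne : u ≠ v := by rintro rfl; omega
    -- adjacencies
    have hadjxu : G.Adj x u := by
      have : G.dist x u = 1 := le_antisymm hxu (hconn.pos_dist_of_ne (Ne.symm huxne))
      exact SimpleGraph.dist_eq_one_iff_adj.mp this
    have hadjuy : G.Adj u y := by
      have : G.dist y u = 1 := le_antisymm hyu (hconn.pos_dist_of_ne (Ne.symm huyne))
      exact (SimpleGraph.dist_eq_one_iff_adj.mp this).symm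
    have hadjyv : G.Adj y v := by
      have : G.dist y v = 1 := le_antisymm hyv (hconn.pos_dist_of_ne (Ne.symm hvyne))
      exact SimpleGraph.dist_eq_one_iff_adj.mp this
    have hadjvx : G.Adj v x := by
      have : G.dist x v = 1 := le_antisymm hxv (hconn.pos_dist_of_ne (Ne.symm hvxne))
      exact (SimpleGraph.dist_eq_one_iff_adj.mp this).symm
    have hnxy : ¬ G.Adj x y := by
      intro hadj
      have := SimpleGraph.dist_eq_one_iff_adj.mpr hadj
      omega
    have hnuv : ¬ G.Adj u v := by
      intro hadj
      have h1 : G.dist u v = 1 := SimpleGraph.dist_eq_one_iff_adj.mpr hadj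
      have ht : G.dist b v ≤ G.dist b u + G.dist u v := hconn.dist_triangle
      omega
    exact hC4 ⟨x, u, y, v, Ne.symm huxne, hxyne, Ne.symm hvxne, huyne, huvne,
      Ne.symm hvyne, hadjxu, hadjuy, hadjyv, hadjvx, hnxy, hnuv⟩
  -- no two middle vertices at distance ≥ 2 (descent)
  have keyk : ∀ k x y, M x → M y → G.dist x y = k + 2 → False := by
    intro k
    induction k with
    | zero => exact fun x y hx hy h => key2 x y hx hy h
    | succ k ih =>
      rintro x y ⟨hax, hbx⟩ ⟨hay, hby⟩ hxy
      have hyx : G.dist y x = k + 3 := by rwa [SimpleGraph.dist_comm] at hxy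
      have hxa : G.dist x a = r := by rwa [SimpleGraph.dist_comm] at hax
      have hxb : G.dist x b = r := by rwa [SimpleGraph.dist_comm] at hbx
      have hya : G.dist y a = r := by rwa [SimpleGraph.dist_comm] at hay
      have hyb : G.dist y b = r := by rwa [SimpleGraph.dist_comm] at hby
      have hzex : ∃ z, G.dist y z ≤ 1 ∧ G.dist x z ≤ k + 2 ∧
          G.dist a z ≤ r ∧ G.dist b z ≤ r := by
        set F : Set (V × ℕ) := {(y, 1), (x, k + 2), (a, r), (b, r)} with hF
        have hpw : ∀ p ∈ F, ∀ q ∈ F, G.dist p.1 q.1 ≤ p.2 + q.2 := by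
          intro p hp q hq
          simp only [hF, Set.mem_insert_iff, Set.mem_singleton_iff] at hp hq
          have d1 := (SimpleGraph.dist_self : G.dist x x = 0)
          have d2 := (SimpleGraph.dist_self : G.dist y y = 0)
          have d3 := (SimpleGraph.dist_self : G.dist a a = 0)
          have d4 := (SimpleGraph.dist_self : G.dist b b = 0)
          have hba : G.dist b a = 2 * r := by rwa [SimpleGraph.dist_comm] at hab
          rcases hp with rfl | rfl | rfl | rfl <;> rcases hq with rfl | rfl | rfl | rfl <;>
            simp only <;> omega
        obtain ⟨z, hz⟩ := hH F ⟨(y, 1), by simp [hF]⟩ (pairwise_balls G hconn hpw)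
        refine ⟨z, ?_, ?_, ?_, ?_⟩
        · exact Set.mem_iInter₂.mp hz (y, 1) (by simp [hF])
        · exact Set.mem_iInter₂.mp hz (x, k + 2) (by simp [hF])
        · exact Set.mem_iInter₂.mp hz (a, r) (by simp [hF])
        · exact Set.mem_iInter₂.mp hz (b, r) (by simp [hF])
      obtain ⟨z, hyz, hxz, haz, hbz⟩ := hzex
      have htz : G.dist a b ≤ G.dist a z + G.dist z b := hconn.dist_triangle
      have hc : G.dist z b = G.dist b z := SimpleGraph.dist_comm ..
      have hMz : M z := ⟨by omega, by omega⟩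
      have hxz' : G.dist x z = k + 2 := by
        have ht : G.dist x y ≤ G.dist x z + G.dist z y := hconn.dist_triangle
        have hc2 : G.dist z y = G.dist y z := SimpleGraph.dist_comm ..
        omega
      exact ih x z ⟨hax, hbx⟩ hMz hxz'
  -- conclude
  intro x hx y hy hne
  have hMx : M x := hMcenter x hx
  have hMy : M y := hMcenter y hy
  have hpos : 0 < G.dist x y := hconn.pos_dist_of_ne hne
  by_contra hadj
  have h1 : G.dist x y ≠ 1 := fun h => hadj (SimpleGraph.dist_eq_one_iff_adj.mp h)
  have h2 : 2 ≤ G.dist x y := by omega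
  exact keyk (G.dist x y - 2) x y hMx hMy (by omega)
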